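/- If a permutation class C contains no horizontal alternation of size ℓ, then for every π ∈ C, every interval I of positions, and the set S_I of points of π with x-coordinate in I, the intervalicity of the y-projection of S_I is at most 2ℓ − 1. -/
import Mathlib


namespace PPM

noncomputable section

/-- Intervalicity: minimum number of pairwise disjoint integer intervals covering `A`. -/
def intervalicity {n : ℕ} (A : Finset (Fin n)) : ℕ :=
  sInf {m | ∃ F : Finset (Finset (Fin n)), F.card = m ∧
    (∀ I ∈ F, ∃ a b : Fin n, I = Finset.Icc a b) ∧
    (F : Set (Finset (Fin n))).PairwiseDisjoint id ∧
    F.sup id = A}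

/-- Grid-complexity of a point set. -/
def gridComplexity {n : ℕ} (S : Finset (Fin n × Fin n)) : ℕ :=
  max (intervalicity (S.image Prod.fst)) (intervalicity (S.image Prod.snd))

/-- The diagram of a permutation. -/
def diagram {n : ℕ} (π : Equiv.Perm (Fin n)) : Finset (Fin n × Fin n) :=
  Finset.univ.image (fun i => (i, π i))

/-- Rooted binary trees with labeled leaves. -/
inductive GTree (α : Type) where
  | leaf : α → GTree α
  | node : GTree α → GTree α → GTree α

namespace GTree
variable {α : Type}

def leafList : GTree α → List α
  | leaf a => [a]
  | node l r => l.leafList ++ r.leafList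

def subtrees : GTree α → List (GTree α)
  | leaf a => [leaf a]
  | node l r => node l r :: (l.subtrees ++ r.subtrees)

def IsCaterpillar : GTree α → Prop
  | leaf _ => True
  | node l r => ((∃ a, l = leaf a) ∨ (∃ a, r = leaf a)) ∧ IsCaterpillar l ∧ IsCaterpillar r

def leafDepth [DecidableEq α] : GTree α → α → ℕ
  | leaf _, _ => 0
  | node l r, a => if a ∈ l.leafList then l.leafDepth a + 1 else r.leafDepth a + 1

end GTree

/-- Grid-width of a grid tree. -/
def treeGW {n : ℕ} (T : GTree (Fin n × Fin n)) : ℕ :=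
  (T.subtrees.map (fun t => gridComplexity t.leafList.toFinset)).foldr max 0

/-- `T` is a grid tree of `π`: its leaves are labeled bijectively by the points of `π`. -/
def IsGridTree {n : ℕ} (π : Equiv.Perm (Fin n)) (T : GTree (Fin n × Fin n)) : Prop :=
  T.leafList.Nodup ∧ T.leafList.toFinset = diagram π

/-- Grid-width of a permutation. -/
def gw {n : ℕ} (π : Equiv.Perm (Fin n)) : ℕ :=
  sInf {w | ∃ T, IsGridTree π T ∧ treeGW T = w}

/-- Path-width of a permutation: minimum over caterpillar grid trees. -/
def pw {n : ℕ} (π : Equiv.Perm (Fin n)) : ℕ :=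
  sInf {w | ∃ T, IsGridTree π T ∧ T.IsCaterpillar ∧ treeGW T = w}

/-- The `i`-th prefix point set of `π` in `σ`-ordering. -/
def prefixSet {n : ℕ} (π σ : Equiv.Perm (Fin n)) (i : Fin n) : Finset (Fin n × Fin n) :=
  (Finset.univ.filter (fun j => j ≤ i)).image (fun j => (σ j, π (σ j)))

/-- Path-width of `π` in `σ`-ordering. -/
def pwOrd {n : ℕ} (π σ : Equiv.Perm (Fin n)) : ℕ :=
  Finset.univ.sup (fun i => gridComplexity (prefixSet π σ i))

/-- Horizontal path-width: `σ` is the identity (left-to-right order). -/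
def hpw {n : ℕ} (π : Equiv.Perm (Fin n)) : ℕ := pwOrd π 1

/-- Vertical path-width: `σ = π⁻¹` (bottom-to-top order). -/
def vpw {n : ℕ} (π : Equiv.Perm (Fin n)) : ℕ := pwOrd π π⁻¹

/-- Pattern containment: `τ` contains `π`. -/
def Contains {n k : ℕ} (τ : Equiv.Perm (Fin n)) (π : Equiv.Perm (Fin k)) : Prop :=
  ∃ f : Fin k → Fin n, StrictMono f ∧ ∀ i j, π i < π j ↔ τ (f i) < τ (f j)

/-- A permutation class, given by its members of each length. -/
abbrev PermClass := ∀ n : ℕ, Set (Equiv.Perm (Fin n))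

/-- Closure under pattern containment. -/
def IsPermClass (C : PermClass) : Prop :=
  ∀ {n k : ℕ} (τ : Equiv.Perm (Fin n)) (π : Equiv.Perm (Fin k)),
    τ ∈ C n → Contains τ π → π ∈ C k

/-- `π` is griddable by the monotone gridding matrix `M`
(`some true` = Inc, `some false` = Dec, `none` = empty);
columns are the first index, rows the second. -/
def MonGriddable {n k l : ℕ} (M : Fin k → Fin l → Option Bool)
    (π : Equiv.Perm (Fin n)) : Prop :=
  ∃ (c : Fin n → Fin k) (r : Fin n → Fin l), Monotone c ∧ Monotone r ∧
    (∀ i : Fin n, (M (c i) (r (π i))).isSome) ∧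
    (∀ i j : Fin n, i < j → c i = c j → r (π i) = r (π j) →
      ∀ b, M (c i) (r (π i)) = some b → (if b then π i < π j else π j < π i))

/-- Adjacency of cells in the cell graph of a monotone gridding matrix:
both cells nonempty, sharing a row or a column, with only empty cells in between. -/
def MonCellAdj {k l : ℕ} (M : Fin k → Fin l → Option Bool)
    (p q : Fin k × Fin l) : Prop :=
  (M p.1 p.2).isSome ∧ (M q.1 q.2).isSome ∧
  ((p.1 = q.1 ∧ p.2 ≠ q.2 ∧ ∀ j : Fin l,
      ((p.2 < j ∧ j < q.2) ∨ (q.2 < j ∧ j < p.2)) → M p.1 j = Option.none) ∨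
   (p.2 = q.2 ∧ p.1 ≠ q.1 ∧ ∀ i : Fin k,
      ((p.1 < i ∧ i < q.1) ∨ (q.1 < i ∧ i < p.1)) → M i p.2 = Option.none))

/-- The cell graph of a monotone gridding matrix. -/
def monCellGraph {k l : ℕ} (M : Fin k → Fin l → Option Bool) :
    SimpleGraph (Fin k × Fin l) :=
  SimpleGraph.fromRel (MonCellAdj M)

/-- A consistent orientation of a monotone gridding matrix, signs coded by `Bool`. -/
def ConsistentOrientation {k l : ℕ} (M : Fin k → Fin l → Option Bool)
    (c : Fin k → Bool) (r : Fin l → Bool) : Prop :=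
  ∀ i j, (M i j = some true → c i = r j) ∧ (M i j = some false → c i ≠ r j)

/-- The refinement `M^{×q}` of a monotone gridding matrix. -/
def refine {k l : ℕ} (M : Fin k → Fin l → Option Bool) (q : ℕ) :
    Fin (q * k) → Fin (q * l) → Option Bool :=
  fun i j =>
    match M ⟨i.val / q, Nat.div_lt_of_lt_mul i.isLt⟩
            ⟨j.val / q, Nat.div_lt_of_lt_mul j.isLt⟩ with
    | some true => if i.val % q = j.val % q then some true else none
    | some false => if i.val % q + j.val % q = q - 1 then some false else none
    | none => none

/-- The restriction of `π` to the position set `P` is order-isomorphic to a member of `C`. -/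
def CellPattern {n : ℕ} (π : Equiv.Perm (Fin n)) (P : Finset (Fin n))
    (C : PermClass) : Prop :=
  ∃ m : ℕ, ∃ σ ∈ C m, ∃ f : Fin m → Fin n, StrictMono f ∧
    Finset.univ.image f = P ∧ ∀ i j, σ i < σ j ↔ π (f i) < π (f j)

/-- `π` is griddable by a gridding matrix with permutation-class entries. -/
def GenGriddable {n k l : ℕ} (M : Fin k → Fin l → PermClass)
    (π : Equiv.Perm (Fin n)) : Prop :=
  ∃ (c : Fin n → Fin k) (r : Fin n → Fin l), Monotone c ∧ Monotone r ∧
    ∀ (a : Fin k) (b : Fin l),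
      (Finset.univ.filter (fun i => c i = a ∧ r (π i) = b) = ∅) ∨
      CellPattern π (Finset.univ.filter (fun i => c i = a ∧ r (π i) = b)) (M a b)

/-- A class containing some nonempty permutation. -/
def ClassNonempty (C : PermClass) : Prop := ∃ n, 0 < n ∧ (C n).Nonempty

/-- An infinite class: members of arbitrarily large lengths. -/
def ClassInfinite (C : PermClass) : Prop := ∀ m, ∃ n, m ≤ n ∧ (C n).Nonempty

/-- Cell adjacency for a general gridding matrix. -/
def GenCellAdj {k l : ℕ} (M : Fin k → Fin l → PermClass)
    (p q : Fin k × Fin l) : Prop :=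
  ClassNonempty (M p.1 p.2) ∧ ClassNonempty (M q.1 q.2) ∧
  ((p.1 = q.1 ∧ p.2 ≠ q.2 ∧ ∀ j : Fin l,
      ((p.2 < j ∧ j < q.2) ∨ (q.2 < j ∧ j < p.2)) → ¬ ClassNonempty (M p.1 j)) ∨
   (p.2 = q.2 ∧ p.1 ≠ q.1 ∧ ∀ i : Fin k,
      ((p.1 < i ∧ i < q.1) ∨ (q.1 < i ∧ i < p.1)) → ¬ ClassNonempty (M i p.2)))

/-- The cell graph of a general gridding matrix. -/
def genCellGraph {k l : ℕ} (M : Fin k → Fin l → PermClass) :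
    SimpleGraph (Fin k × Fin l) :=
  SimpleGraph.fromRel (GenCellAdj M)

/-- Unbounded horizontal path-width of a class. -/
def UnboundedHPW (C : PermClass) : Prop := ∀ K, ∃ n, ∃ π ∈ C n, K < hpw π

/-- Unbounded vertical path-width of a class. -/
def UnboundedVPW (C : PermClass) : Prop := ∀ K, ∃ n, ∃ π ∈ C n, K < vpw π

/-- `(p, q)` is a bumper. -/
def Bumper {k l : ℕ} (M : Fin k → Fin l → PermClass) (p q : Fin k × Fin l) : Prop :=
  (UnboundedHPW (M q.1 q.2) ∧ p.1 = q.1) ∨ (UnboundedVPW (M q.1 q.2) ∧ p.2 = q.2)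

/-- The cell graph of `M` contains a bumper-ended path. -/
def HasBumperEndedPath {k l : ℕ} (M : Fin k → Fin l → PermClass) : Prop :=
  ∃ (L : List (Fin k × Fin l)) (h : 2 ≤ L.length),
    List.Chain' (genCellGraph M).Adj L ∧ L.Nodup ∧
    Bumper M (L.get ⟨1, by omega⟩) (L.get ⟨0, by omega⟩) ∧
    Bumper M (L.get ⟨L.length - 2, by omega⟩) (L.get ⟨L.length - 1, by omega⟩)

/-- Horizontal alternation: all even entries (1-based values) precede all odd entries. -/
def IsHorizAlt {n : ℕ} (π : Equiv.Perm (Fin n)) : Prop :=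
  ∀ i j : Fin n, i < j → ¬(Odd ((π i).val + 1) ∧ Even ((π j).val + 1))

/-- `σ` is monotone on the positions satisfying `P`. -/
def MonOn {n : ℕ} (σ : Equiv.Perm (Fin n)) (P : Fin n → Prop) : Prop :=
  (∀ i j, i < j → P i → P j → σ i < σ j) ∨ (∀ i j, i < j → P i → P j → σ j < σ i)

/-- Monotone horizontal alternation. -/
def IsMonHorizAlt {n : ℕ} (σ : Equiv.Perm (Fin n)) : Prop :=
  IsHorizAlt σ ∧ MonOn σ (fun i => Odd ((σ i).val + 1)) ∧
    MonOn σ (fun i => Even ((σ i).val + 1))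

/-- The 1×2 horizontal monotone juxtaposition matrix. -/
def juxH (b₁ b₂ : Bool) : Fin 2 → Fin 1 → Option Bool :=
  fun i _ => some (if i = 0 then b₁ else b₂)

/-- No three consecutive cells of the list share a row or a column. -/
def ProperTurning {k l : ℕ} (L : List (Fin k × Fin l)) : Prop :=
  ∀ a b c : Fin k × Fin l, [a, b, c] <:+: L →
    ¬(a.1 = b.1 ∧ b.1 = c.1) ∧ ¬(a.2 = b.2 ∧ b.2 = c.2)

/-- The class of increasing (`true`) or decreasing (`false`) permutations. -/
def monClass (b : Bool) : PermClass :=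
  fun n => {π | ∀ i j : Fin n, i < j → (if b then π i < π j else π j < π i)}

end

end PPM

open PPM


lemma exists_horizAlt (C : PermClass) (hC : IsPermClass C) {ℓ n : ℕ}
    (π : Equiv.Perm (Fin n)) (hπ : π ∈ C n) (w : Fin ℓ → Fin n)
    (hw : StrictMono w)
    (hpos : ∀ r r' : Fin ℓ, Odd r.val → Even r'.val →
      π.symm (w r) < π.symm (w r')) :
    ∃ σ ∈ C ℓ, IsHorizAlt σ := by
  classical
  set p : Fin ℓ → Fin n := fun r => π.symm (w r) with hp
  have hpinj : Function.Injective p := fun x y h => hw.injective (π.symm.injective h)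
  set P : Finset (Fin n) := Finset.univ.image p with hP
  have hcard : P.card = ℓ := by
    rw [hP, Finset.card_image_of_injective _ hpinj, Finset.card_univ, Fintype.card_fin]
  set e₂ := P.orderIsoOfFin hcard with he₂
  have hmem : ∀ r, p r ∈ P := fun r => Finset.mem_image_of_mem _ (Finset.mem_univ r)
  set e₁f : Fin ℓ → ↥P := fun r => ⟨p r, hmem r⟩ with he₁f
  have he₁bij : Function.Bijective e₁f := by
    rw [Fintype.bijective_iff_injective_and_card]
    refine ⟨fun x y h => hpinj (congrArg Subtype.val h), by simp [Fintype.card_coe, hcard]⟩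
  set e₁ := Equiv.ofBijective e₁f he₁bij with he₁
  set σ : Equiv.Perm (Fin ℓ) := e₂.toEquiv.trans e₁.symm with hσ
  set f : Fin ℓ → Fin n := fun i => (e₂ i : Fin n) with hf
  have hfmono : StrictMono f := fun i j hij => Subtype.coe_lt_coe.mpr (e₂.strictMono hij)
  have hkey : ∀ i, f i = p (σ i) := by
    intro i
    have h1 : e₁ (σ i) = e₂ i := by simp [hσ]
    exact (congrArg Subtype.val h1).symm
  have hπf : ∀ i, π (f i) = w (σ i) := by
    intro i; rw [hkey]; exact π.apply_symm_apply _
  have hcont : Contains π σ := by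
    refine ⟨f, hfmono, fun i j => ?_⟩
    rw [hπf, hπf, hw.lt_iff_lt]
  refine ⟨σ, hC π σ hπ hcont, ?_⟩
  intro i j hij ⟨ho, he⟩
  rw [Nat.odd_iff] at ho
  rw [Nat.even_iff] at he
  have hoe : Even ((σ i).val) := Nat.even_iff.mpr (by omega)
  have hho : Odd ((σ j).val) := Nat.odd_iff.mpr (by omega)
  have := hpos (σ j) (σ i) hho hoe
  have h1 : f j < f i := by rw [hkey i, hkey j]; exact this
  exact absurd (hfmono hij) (not_lt.mpr h1.le)

lemma intervalicity_le_starts {n : ℕ} (B : Finset (Fin n)) :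
    intervalicity B ≤ (B.filter (fun x => ∀ y ∈ B, y.val + 1 ≠ x.val)).card := by
  classical
  set S := B.filter (fun x => ∀ y ∈ B, y.val + 1 ≠ x.val) with hS
  set Run : Fin n → Finset (Fin n) :=
    fun s => B.filter (fun x => s ≤ x ∧ Finset.Icc s x ⊆ B) with hRun
  -- self membership
  have hself : ∀ s ∈ B, s ∈ Run s := by
    intro s hs
    simp only [hRun, Finset.mem_filter]
    exact ⟨hs, le_refl s, by rw [Finset.Icc_self]; simpa using hs⟩
  -- key disjointness fact
  have key : ∀ s ∈ S, ∀ s' ∈ S, s < s' → ∀ x, x ∈ Run s → x ∈ Run s' → False := by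
    intro s hs s' hs' hlt x hx hx'
    simp only [hRun, Finset.mem_filter] at hx hx'
    have hs'start : ∀ y ∈ B, y.val + 1 ≠ s'.val := (Finset.mem_filter.mp hs').2
    have h1 : 1 ≤ s'.val := by
      have : s.val < s'.val := hlt
      omega
    set y : Fin n := ⟨s'.val - 1, by omega⟩ with hy
    have hymem : y ∈ Finset.Icc s x := by
      rw [Finset.mem_Icc]
      constructor
      · show s.val ≤ y.val
        have : s.val < s'.val := hlt
        simp [hy]; omega
      · show y.val ≤ x.val
        have h2 : s'.val ≤ x.val := hx'.2.1
        simp [hy]; omega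
    exact hs'start y (hx.2.2 hymem) (by simp [hy]; omega)
  -- the cover
  set F : Finset (Finset (Fin n)) := S.image Run with hF
  have hinj : Set.InjOn Run ↑S := by
    intro s hs s' hs' heq
    by_contra hne
    rcases lt_or_gt_of_ne hne with h | h
    · have hs'B : s' ∈ B := (Finset.mem_filter.mp hs').1
      exact key s hs s' hs' h s' (heq ▸ hself s' hs'B) (hself s' hs'B)
    · have hsB : s ∈ B := (Finset.mem_filter.mp hs).1
      exact key s' hs' s hs h s (heq ▸ hself s hsB) (hself s hsB)
  refine Nat.sInf_le ⟨F, ?_, ?_, ?_, ?_⟩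
  · rw [hF, Finset.card_image_of_injOn hinj]
  · -- each is an Icc
    intro I hI
    rw [hF, Finset.mem_image] at hI
    obtain ⟨s, hsS, rfl⟩ := hI
    have hsB : s ∈ B := (Finset.mem_filter.mp hsS).1
    set T := B.filter (fun e => Finset.Icc s e ⊆ B) with hT
    have hTne : T.Nonempty := ⟨s, by
      simp only [hT, Finset.mem_filter]
      exact ⟨hsB, by rw [Finset.Icc_self]; simpa using hsB⟩⟩
    set E := T.max' hTne with hE
    have hET : E ∈ T := T.max'_mem hTne
    have hEIcc : Finset.Icc s E ⊆ B := (Finset.mem_filter.mp hET).2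
    refine ⟨s, E, ?_⟩
    ext x
    simp only [hRun, Finset.mem_filter, Finset.mem_Icc]
    constructor
    · rintro ⟨hxB, hsx, hIcc⟩
      refine ⟨hsx, ?_⟩
      have hxT : x ∈ T := Finset.mem_filter.mpr ⟨hxB, hIcc⟩
      exact T.le_max' x hxT
    · rintro ⟨hsx, hxE⟩
      have hxB : x ∈ B := hEIcc (Finset.mem_Icc.mpr ⟨hsx, hxE⟩)
      refine ⟨hxB, hsx, fun z hz => ?_⟩
      rw [Finset.mem_Icc] at hz
      exact hEIcc (Finset.mem_Icc.mpr ⟨hz.1, le_trans hz.2 hxE⟩)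
  · -- pairwise disjoint
    intro I hI J hJ hne
    simp only [hF, Finset.coe_image, Set.mem_image] at hI hJ
    obtain ⟨s, hsS, rfl⟩ := hI
    obtain ⟨s', hs'S, rfl⟩ := hJ
    have hsne : s ≠ s' := fun h => hne (by rw [h])
    show Disjoint (Run s) (Run s')
    rw [Finset.disjoint_left]
    intro x hx hx'
    rcases lt_or_gt_of_ne hsne with h | h
    · exact key s (by exact_mod_cast hsS) s' (by exact_mod_cast hs'S) h x hx hx'
    · exact key s' (by exact_mod_cast hs'S) s (by exact_mod_cast hsS) h x hx' hx
  · -- sup = B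
    apply le_antisymm
    · apply Finset.sup_le
      intro I hI
      rw [hF, Finset.mem_image] at hI
      obtain ⟨s, _, rfl⟩ := hI
      exact Finset.filter_subset _ _
    · intro x hx
      set T' := B.filter (fun m => m ≤ x ∧ Finset.Icc m x ⊆ B) with hT'
      have hxT' : x ∈ T' := by
        simp only [hT', Finset.mem_filter]
        exact ⟨hx, le_refl x, by rw [Finset.Icc_self]; simpa using hx⟩
      have hT'ne : T'.Nonempty := ⟨x, hxT'⟩
      set s := T'.min' hT'ne with hs
      have hsT' : s ∈ T' := T'.min'_mem hT'ne
      simp only [hT', Finset.mem_filter] at hsT'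
      obtain ⟨hsB, hsx, hsIcc⟩ := hsT'
      have hsS : s ∈ S := by
        rw [hS, Finset.mem_filter]
        refine ⟨hsB, fun y hy hy1 => ?_⟩
        have hyT' : y ∈ T' := by
          simp only [hT', Finset.mem_filter]
          refine ⟨hy, ?_, fun z hz => ?_⟩
          · show y.val ≤ x.val
            have : s.val ≤ x.val := hsx
            omega
          · rw [Finset.mem_Icc] at hz
            by_cases hzy : z = y
            · exact hzy ▸ hy
            · have hzs : s ≤ z := by
                show s.val ≤ z.val
                have h1 : y.val ≤ z.val := hz.1
                have h2 : z.val ≠ y.val := fun h => hzy (Fin.ext h)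
                omega
              exact hsIcc (Finset.mem_Icc.mpr ⟨hzs, hz.2⟩)
        have : T'.min' hT'ne ≤ y := T'.min'_le y hyT'
        have hys : y.val < s.val := by omega
        exact absurd (le_trans (hs ▸ this) (le_of_eq rfl)) (not_le.mpr hys)
      have hxRun : x ∈ Run s := by
        simp only [hRun, Finset.mem_filter]
        exact ⟨hx, hsx, hsIcc⟩
      have hRunF : Run s ∈ F := Finset.mem_image_of_mem Run hsS
      exact (Finset.le_sup (f := id) hRunF) hxRun



lemma mem_proj_iff {n : ℕ} (π : Equiv.Perm (Fin n)) (a b : Fin n) (y : Fin n) :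
    y ∈ ((diagram π).filter (fun p => a ≤ p.1 ∧ p.1 ≤ b)).image Prod.snd ↔
      a ≤ π.symm y ∧ π.symm y ≤ b := by
  simp only [diagram, Finset.mem_image, Finset.mem_filter, Finset.mem_univ, true_and]
  constructor
  · rintro ⟨p, ⟨⟨i, rfl⟩, hab⟩, rfl⟩
    simpa using hab
  · rintro ⟨ha, hb⟩
    exact ⟨(π.symm y, y), ⟨⟨π.symm y, by simp⟩, by simpa using ⟨ha, hb⟩⟩, rfl⟩

lemma exists_alt_core (C : PermClass) (hC : IsPermClass C) {ℓ n : ℕ} (hl : 0 < ℓ)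
    (π : Equiv.Perm (Fin n)) (hπ : π ∈ C n) (a b : Fin n) (B : Finset (Fin n))
    (hqB : ∀ y, y ∈ B ↔ a ≤ π.symm y ∧ π.symm y ≤ b)
    (hcard : 2 * ℓ ≤ (B.filter (fun x => ∀ y ∈ B, y.val + 1 ≠ x.val)).card) :
    ∃ σ ∈ C ℓ, IsHorizAlt σ := by
  classical
  set S := B.filter (fun x => ∀ y ∈ B, y.val + 1 ≠ x.val) with hS
  set st := S.orderEmbOfCardLe hcard with hst
  have hstS : ∀ i, st i ∈ S := fun i => S.orderEmbOfCardLe_mem hcard i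
  set V : ℕ → Fin n := fun m => st ⟨min m (2*ℓ-1), by omega⟩ with hV
  have hVS : ∀ m, V m ∈ S := fun m => hstS _
  have hVB : ∀ m, V m ∈ B := fun m => (Finset.mem_filter.mp (hVS m)).1
  have hVstart : ∀ m, ∀ y ∈ B, y.val + 1 ≠ (V m).val :=
    fun m => (Finset.mem_filter.mp (hVS m)).2
  have hVlt : ∀ m m', m' < 2*ℓ → m < m' → (V m).val < (V m').val := by
    intro m m' h2 hlt
    exact st.strictMono (show (⟨min m (2*ℓ-1), by omega⟩ : Fin (2*ℓ)) <
      ⟨min m' (2*ℓ-1), by omega⟩ from Fin.mk_lt_mk.mpr (by omega))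
  have hVle : ∀ m m', m ≤ m' → (V m).val ≤ (V m').val := by
    intro m m' hle
    exact st.monotone (show (⟨min m (2*ℓ-1), by omega⟩ : Fin (2*ℓ)) ≤
      ⟨min m' (2*ℓ-1), by omega⟩ from Fin.mk_le_mk.mpr (by omega))
  have h1V : ∀ m, 0 < m → m < 2*ℓ → 1 ≤ (V m).val := by
    intro m h0 h2
    have := hVlt 0 m h2 h0
    omega
  set Gv : ℕ → Fin n := fun t =>
    ⟨(V (t+1)).val - 1, lt_of_le_of_lt (Nat.sub_le _ _) (V (t+1)).isLt⟩ with hGv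
  have hGval : ∀ t, (Gv t).val = (V (t+1)).val - 1 := fun t => rfl
  have hGnotB : ∀ t, t < 2*ℓ-1 → Gv t ∉ B := by
    intro t ht hmem
    refine hVstart (t+1) (Gv t) hmem ?_
    have := h1V (t+1) (Nat.succ_pos t) (by omega)
    rw [hGval]
    omega
  have hVG : ∀ t, t < 2*ℓ-1 → (V t).val < (Gv t).val := by
    intro t ht
    have hlt := hVlt t (t+1) (by omega) (Nat.lt_succ_self t)
    have hne : (V t).val ≠ (Gv t).val := by
      intro h
      exact hGnotB t ht (Fin.ext h ▸ hVB t)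
    rw [hGval] at *
    omega
  have hGV : ∀ t, t < 2*ℓ-1 → (Gv t).val < (V (t+1)).val := by
    intro t ht
    have := h1V (t+1) (Nat.succ_pos t) (by omega)
    rw [hGval]
    omega
  -- pigeonhole on sides
  set L := Finset.univ.filter (fun t : Fin (2*ℓ-1) => (π.symm (Gv t.val)).val < a.val)
    with hL
  have hLR : L.card + (Finset.univ.filter
      (fun t : Fin (2*ℓ-1) => ¬ (π.symm (Gv t.val)).val < a.val)).card = 2*ℓ-1 := by
    rw [hL, Finset.card_filter_add_card_filter_not]
    simp
  set R := Finset.univ.filter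
      (fun t : Fin (2*ℓ-1) => ¬ (π.symm (Gv t.val)).val < a.val) with hR
  have hGside : ∀ t : Fin (2*ℓ-1), t ∈ R → b.val < (π.symm (Gv t.val)).val := by
    intro t ht
    rw [hR, Finset.mem_filter] at ht
    have hnotB := hGnotB t.val t.isLt
    rw [hqB] at hnotB
    push_neg at hnotB
    have ha : a ≤ π.symm (Gv t.val) := not_lt.mp (fun h => ht.2 h)
    exact hnotB ha
  have hcases : ℓ ≤ L.card ∨ ℓ ≤ R.card := by omega
  have main : ∀ u' : ℕ → ℕ, (∀ i, u' i < 2*ℓ-1) →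
      (∀ i i', i ≤ i' → u' i ≤ u' i') → (∀ i i', i < i' → i' < ℓ → u' i < u' i') →
      ((∀ i, i < ℓ → (π.symm (Gv (u' i))).val < a.val) ∨
       (∀ i, i < ℓ → b.val < (π.symm (Gv (u' i))).val)) →
      ∃ σ ∈ C ℓ, IsHorizAlt σ := by
    intro u' hu'lt hu'le hu'strict hside
    have hidx : ∀ r : Fin ℓ, r.val / 2 < ℓ := by
      intro r
      have := r.isLt
      omega
    rcases hside with hside | hside
    · -- gaps on the left: even ranks are V (inside), odd ranks are Gv (left)
      set w : Fin ℓ → Fin n := fun r =>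
        if Even r.val then V (u' (r.val/2)) else Gv (u' (r.val/2)) with hw
      have hwmono : StrictMono w := by
        intro r r' hrr'
        have hrlt : r.val < r'.val := hrr'
        have hi' : r'.val / 2 < ℓ := hidx r'
        show w r < w r'
        rw [hw]
        simp only []
        rw [Fin.lt_def]
        by_cases he : Even r.val <;> by_cases he' : Even r'.val <;>
          simp only [he, he', if_true, if_false, reduceIte] <;>
          rw [Nat.even_iff] at he he'
        · exact hVlt _ _ (by have := hu'lt (r'.val/2); omega)
            (hu'strict _ _ (by omega) hi')
        · have h2 : u' (r.val/2) ≤ u' (r'.val/2) := hu'le _ _ (by omega)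
          exact lt_of_le_of_lt (hVle _ _ h2) (hVG _ (hu'lt _))
        · refine lt_of_lt_of_le (hGV _ (hu'lt _)) (hVle _ _ ?_)
          have := hu'strict (r.val/2) (r'.val/2) (by omega) hi'
          omega
        · refine lt_of_lt_of_le (hGV _ (hu'lt _)) (lt_of_le_of_lt (hVle _ _ ?_)
            (hVG _ (hu'lt _))).le
          have := hu'strict (r.val/2) (r'.val/2) (by omega) hi'
          omega
      refine exists_horizAlt C hC π hπ w hwmono ?_
      intro r r' hodd heven
      have hne : ¬ Even r.val := by rw [Nat.even_iff]; rw [Nat.odd_iff] at hodd; omega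
      rw [Fin.lt_def, hw]
      simp only [hne, heven, if_false, if_true, reduceIte]
      have hlt := hside (r.val/2) (hidx r)
      have hmem := (hqB (V (u' (r'.val/2)))).mp (hVB _)
      have : a.val ≤ (π.symm (V (u' (r'.val/2)))).val := hmem.1
      omega
    · -- gaps on the right: even ranks are Gv (right), odd ranks are V (inside)
      set w : Fin ℓ → Fin n := fun r =>
        if Even r.val then Gv (u' (r.val/2)) else V (u' (r.val/2) + 1) with hw
      have hwmono : StrictMono w := by
        intro r r' hrr'
        have hrlt : r.val < r'.val := hrr'
        have hi' : r'.val / 2 < ℓ := hidx r'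
        show w r < w r'
        rw [hw]
        simp only []
        rw [Fin.lt_def]
        by_cases he : Even r.val <;> by_cases he' : Even r'.val <;>
          simp only [he, he', if_true, if_false, reduceIte] <;>
          rw [Nat.even_iff] at he he'
        · refine lt_of_lt_of_le (hGV _ (hu'lt _)) (lt_of_le_of_lt (hVle _ _ ?_)
            (hVG _ (hu'lt _))).le
          have := hu'strict (r.val/2) (r'.val/2) (by omega) hi'
          omega
        · refine lt_of_lt_of_le (hGV _ (hu'lt _)) (hVle _ _ ?_)
          have := hu'le (r.val/2) (r'.val/2) (by omega)
          omega
        · refine lt_of_le_of_lt (hVle _ _ ?_) (hVG _ (hu'lt _))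
          have := hu'strict (r.val/2) (r'.val/2) (by omega) hi'
          omega
        · refine hVlt _ _ (by have := hu'lt (r'.val/2); omega) ?_
          have := hu'strict (r.val/2) (r'.val/2) (by omega) hi'
          omega
      refine exists_horizAlt C hC π hπ w hwmono ?_
      intro r r' hodd heven
      have hne : ¬ Even r.val := by rw [Nat.even_iff]; rw [Nat.odd_iff] at hodd; omega
      rw [Fin.lt_def, hw]
      simp only [hne, heven, if_false, if_true, reduceIte]
      have hlt := hside (r'.val/2) (hidx r')
      have hmem := (hqB (V (u' (r.val/2) + 1))).mp (hVB _)
      have : (π.symm (V (u' (r.val/2) + 1))).val ≤ b.val := hmem.2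
      omega
  rcases hcases with hside | hside
  · set u := L.orderEmbOfCardLe hside with hu
    refine main (fun i => (u ⟨min i (ℓ-1), by omega⟩).val) (fun i => (u _).isLt)
      ?_ ?_ (Or.inl ?_)
    · intro i i' hle
      exact u.monotone (Fin.mk_le_mk.mpr (by omega))
    · intro i i' hlt hl'
      exact u.strictMono (Fin.mk_lt_mk.mpr (by omega))
    · intro i hi
      have hmem := L.orderEmbOfCardLe_mem hside ⟨min i (ℓ-1), by omega⟩
      exact (Finset.mem_filter.mp hmem).2
  · set u := R.orderEmbOfCardLe hside with hu
    refine main (fun i => (u ⟨min i (ℓ-1), by omega⟩).val) (fun i => (u _).isLt)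
      ?_ ?_ (Or.inr ?_)
    · intro i i' hle
      exact u.monotone (Fin.mk_le_mk.mpr (by omega))
    · intro i i' hlt hl'
      exact u.strictMono (Fin.mk_lt_mk.mpr (by omega))
    · intro i hi
      exact hGside _ (R.orderEmbOfCardLe_mem hside ⟨min i (ℓ-1), by omega⟩)

/-- if `C` contains no horizontal alternation of size `ℓ`, then for any
`π ∈ C` and any interval of positions `I`, the y-projection of the points of `π`
with x-coordinate in `I` has intervalicity at most `2ℓ − 1`. -/
theorem intv_y_of_interval_le (C : PermClass) (hC : IsPermClass C) (ℓ : ℕ)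
    (halt : ¬ ∃ π ∈ C ℓ, IsHorizAlt π) :
    ∀ (n : ℕ) (π : Equiv.Perm (Fin n)), π ∈ C n → ∀ a b : Fin n,
      intervalicity
        (((diagram π).filter (fun p => a ≤ p.1 ∧ p.1 ≤ b)).image Prod.snd)
        ≤ 2 * ℓ - 1 := by
  intro n π hπ a b
  by_contra h
  push_neg at h
  set B := ((diagram π).filter (fun p => a ≤ p.1 ∧ p.1 ≤ b)).image Prod.snd with hB
  have hA := intervalicity_le_starts B
  rcases Nat.eq_zero_or_pos ℓ with rfl | hl
  · exact halt (exists_horizAlt C hC π hπ Fin.elim0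
      (by intro r r' _; exact r.elim0) (by intro r r' _; exact r.elim0))
  · exact halt (exists_alt_core C hC hl π hπ a b B (mem_proj_iff π a b) (by omega))
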